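/- For every positive integer k and every rational α ∉ ℤ, the number \(\psi_k(1-\alpha) - (-1)^k \psi_k(\alpha)\) is either zero or an algebraic multiple of π^{k+1}, and it is zero if and only if k is even and α is a half-integer. -/

import Mathlib

noncomputable def digamma (x : ℝ) : ℝ := deriv Real.Gamma x / Real.Gamma x

open Real Topology Polynomial

noncomputable def Pcot : ℕ → ℚ[X]
  | 0 => X
  | (k+1) => -((1 + X^2) * derivative (Pcot k))

def NNp (p : ℚ[X]) : Prop := ∀ i, 0 ≤ p.coeff i
def PPp (p : ℚ[X]) : Prop := NNp p ∧ 0 < p.coeff 0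

lemma NNp.add {p q} (hp : NNp p) (hq : NNp q) : NNp (p + q) := fun i => by
  rw [coeff_add]; exact add_nonneg (hp i) (hq i)

lemma NNp.mul {p q} (hp : NNp p) (hq : NNp q) : NNp (p * q) := fun i => by
  rw [coeff_mul]; exact Finset.sum_nonneg fun x _ => mul_nonneg (hp _) (hq _)

lemma NNp.deriv {p} (hp : NNp p) : NNp (derivative p) := fun i => by
  rw [coeff_derivative]; exact mul_nonneg (hp _) (by positivity)

lemma NNp_C {a : ℚ} (ha : 0 ≤ a) : NNp (C a) := fun i => by
  rcases eq_or_ne i 0 with rfl | h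
  · simpa using ha
  · simp [coeff_C, h]

lemma NNp_X : NNp (X : ℚ[X]) := fun i => by
  rcases eq_or_ne i 1 with rfl | h
  · simp
  · simp [coeff_X, h, Ne.symm h]

lemma NNp_one : NNp (1 : ℚ[X]) := NNp_C zero_le_one

lemma NNp.aeval_nonneg {p} (hp : NNp p) {s : ℝ} (hs : 0 ≤ s) : 0 ≤ (aeval s p : ℝ) := by
  rw [aeval_def, ← eval_map, eval_eq_sum_range]
  refine Finset.sum_nonneg fun i _ => ?_
  rw [coeff_map]
  have := hp i
  have : (0:ℝ) ≤ (algebraMap ℚ ℝ) (p.coeff i) := by simpa using (Rat.cast_nonneg (K := ℝ)).2 this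
  exact mul_nonneg this (pow_nonneg hs i)

lemma PPp.aeval_pos {p} (hp : PPp p) {s : ℝ} (hs : 0 ≤ s) : 0 < (aeval s p : ℝ) := by
  have h := X_mul_divX_add p
  have hd : NNp (divX p) := fun i => by rw [coeff_divX]; exact hp.1 _
  calc (0:ℝ) < s * aeval s (divX p) + (p.coeff 0 : ℝ) := by
        have : (0:ℝ) < (p.coeff 0 : ℝ) := by exact_mod_cast hp.2
        nlinarith [hd.aeval_nonneg hs]
    _ = aeval s p := by
        conv_rhs => rw [← h]
        rw [map_add, map_mul, aeval_X, aeval_C, eq_ratCast]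

lemma Pcot_struct (m : ℕ) : ∃ A B : ℚ[X], PPp A ∧ PPp B ∧
    Pcot (2*m+1) = -((1 + X^2) * A.comp (X^2)) ∧
    Pcot (2*m+2) = X * ((1 + X^2) * B.comp (X^2)) := by
  induction m with
  | zero =>
    refine ⟨1, C 2, ⟨NNp_one, by norm_num⟩, ⟨NNp_C (by norm_num), by norm_num⟩, ?_, ?_⟩
    · show Pcot (0+1) = _
      rw [Pcot]
      simp [Pcot]
    · show Pcot (0+1+1) = _
      rw [Pcot, Pcot]
      simp [Pcot, map_ofNat]
      ring
  | succ m ih =>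
    obtain ⟨A, B, hA, hB, hA1, hB1⟩ := ih
    refine ⟨(1 + C 3 * X) * B + C 2 * (X * (1 + X)) * derivative B,
      C 2 * ((1 + C 3 * X) * B + C 2 * (X * (1 + X)) * derivative B) +
        C 2 * ((1 + X) * derivative ((1 + C 3 * X) * B + C 2 * (X * (1 + X)) * derivative B)),
      ?_, ?_, ?_, ?_⟩
    · constructor
      · exact ((NNp_one.add ((NNp_C (by norm_num)).mul NNp_X)).mul hB.1).add
          (((NNp_C (by norm_num)).mul (NNp_X.mul (NNp_one.add NNp_X))).mul hB.1.deriv)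
      · simp [mul_coeff_zero, coeff_add, coeff_X_zero, coeff_one, coeff_C]
        exact hB.2
    · constructor
      · refine ((NNp_C (by norm_num)).mul ?_).add ((NNp_C (by norm_num)).mul
          ((NNp_one.add NNp_X).mul ?_))
        · exact ((NNp_one.add ((NNp_C (by norm_num)).mul NNp_X)).mul hB.1).add
            (((NNp_C (by norm_num)).mul (NNp_X.mul (NNp_one.add NNp_X))).mul hB.1.deriv)
        · exact (((NNp_one.add ((NNp_C (by norm_num)).mul NNp_X)).mul hB.1).add
            (((NNp_C (by norm_num)).mul (NNp_X.mul (NNp_one.add NNp_X))).mul hB.1.deriv)).deriv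
      · have h1 : NNp (derivative ((1 + C 3 * X) * B + C 2 * (X * (1 + X)) * derivative B)) :=
          (((NNp_one.add ((NNp_C (by norm_num)).mul NNp_X)).mul hB.1).add
            (((NNp_C (by norm_num)).mul (NNp_X.mul (NNp_one.add NNp_X))).mul hB.1.deriv)).deriv
        have := h1 0
        simp only [mul_coeff_zero, coeff_add, coeff_X_zero, coeff_one, coeff_C] at *
        simp at *
        nlinarith [hB.2]
    · have h : 2*(m+1)+1 = (2*m+2)+1 := by ring
      rw [h, Pcot, hB1]
      simp only [derivative_mul, derivative_comp, derivative_X, derivative_one,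
        derivative_X_pow, derivative_add, add_comp, mul_comp, one_comp, C_comp, X_comp, zero_comp,
        map_ofNat, Nat.cast_ofNat, ofNat_comp, derivative_ofNat, Nat.cast_one, map_one, derivative_zero, C_1, mul_zero, mul_one, add_zero, zero_add]
      ring
    · have h : 2*(m+1)+2 = ((2*m+2)+1)+1 := by ring
      rw [h, Pcot, Pcot, hB1]
      simp only [derivative_mul, derivative_comp, derivative_X, derivative_one,
        derivative_X_pow, derivative_add, derivative_neg, add_comp, mul_comp, one_comp,
        C_comp, X_comp, zero_comp, map_ofNat, Nat.cast_ofNat, ofNat_comp, derivative_ofNat, Nat.cast_one, map_one, derivative_zero, C_1, mul_zero, mul_one, add_zero, zero_add]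
      norm_num
      ring


lemma aeval_isAlgebraic {c : ℝ} (hc : IsIntegral ℚ c) (p : ℚ[X]) :
    IsAlgebraic ℚ (aeval c p : ℝ) :=
  isAlgebraic_iff_isIntegral.mpr (adjoin_le_integralClosure hc (aeval_mem_adjoin_singleton ℚ c))

lemma isIntegral_I : IsIntegral ℚ Complex.I := by
  refine ⟨X^2 + 1, by monicity!, ?_⟩
  simp [Complex.I_sq]

lemma isIntegral_cot_pi_rat (α : ℚ) : IsIntegral ℚ (Real.cot (π * α)) := by
  set θ : ℝ := π * α with hθ
  set z : ℂ := Complex.exp (θ * Complex.I) with hz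
  have hαd : (α : ℂ) * (α.den : ℂ) = (α.num : ℂ) := by
    exact_mod_cast congrArg (fun q : ℚ => (q : ℂ)) (Rat.mul_den_eq_num α)
  have hz2 : z ^ (2 * α.den) = 1 := by
    rw [hz, ← Complex.exp_nat_mul]
    rw [show ((2 * α.den : ℕ) : ℂ) * (↑θ * Complex.I) = (α.num : ℂ) * (2 * π * Complex.I) by
      push_cast [hθ]
      rw [← hαd]
      ring]
    exact Complex.exp_int_mul_two_pi_mul_I _
  have hzi : IsIntegral ℚ z := by
    refine ⟨X ^ (2 * α.den) - 1, ?_, ?_⟩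
    · have := monic_X_pow_sub_C (1:ℚ) (n := 2 * α.den) (by positivity)
      simpa using this
    · simp [hz2]
  have hzinv : IsIntegral ℚ z⁻¹ := hzi.inv
  have hhalf : IsIntegral ℚ ((2 : ℂ))⁻¹ := by
    have : ((2:ℂ))⁻¹ = algebraMap ℚ ℂ (2⁻¹ : ℚ) := by push_cast; norm_num
    rw [this]; exact isIntegral_algebraMap
  have hcos : IsIntegral ℚ (Complex.cos θ) := by
    have : Complex.cos θ = (z + z⁻¹) * 2⁻¹ := by
      rw [Complex.cos, hz, ← Complex.exp_neg]
      ring_nf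
    rw [this]
    exact (hzi.add hzinv).mul hhalf
  have hsin : IsIntegral ℚ (Complex.sin θ) := by
    have : Complex.sin θ = (z⁻¹ - z) * Complex.I * 2⁻¹ := by
      rw [Complex.sin, hz, ← Complex.exp_neg]
      ring_nf
    rw [this]
    exact (((hzinv.sub hzi)).mul isIntegral_I).mul hhalf
  have hcot : IsIntegral ℚ (Complex.cot θ) := by
    rw [Complex.cot_eq_cos_div_sin, div_eq_mul_inv]
    exact hcos.mul hsin.inv
  have hre : ((Real.cot θ : ℂ)) = Complex.cot θ := Complex.ofReal_cot θ
  have := (isIntegral_algHom_iff (Complex.ofRealAm.restrictScalars ℚ)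
    Complex.ofReal_injective (x := Real.cot θ)).mp ?_
  · exact this
  · show IsIntegral ℚ ((Real.cot θ : ℂ))
    rw [hre]; exact hcot

def U : Set ℝ := {x | ∀ n : ℤ, x ≠ n}

lemma U_open : IsOpen U := by
  have : U = (Set.range ((↑) : ℤ → ℝ))ᶜ := by
    ext x
    simp only [U, Set.mem_compl_iff, Set.mem_range, not_exists, Set.mem_setOf_eq]
    exact ⟨fun h n hn => h n hn.symm, fun h n hn => h n hn.symm⟩
  rw [this]
  exact Int.isClosedEmbedding_coe_real.isClosed_range.isOpen_compl

lemma U_one_sub {x : ℝ} (hx : x ∈ U) : (1 - x) ∈ U := fun n h =>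
  hx (1 - n) (by push_cast; linarith)

lemma U_sin_ne {x : ℝ} (hx : x ∈ U) : Real.sin (π * x) ≠ 0 := by
  intro h
  rcases Real.sin_eq_zero_iff.mp h with ⟨n, hn⟩
  have : x = n := by
    have hπ := Real.pi_ne_zero
    have := mul_right_cancel₀ hπ (by linarith [hn] : (n:ℝ) * π = x * π)
    linarith [this]
  exact hx n this

lemma U_Gamma_ne {x : ℝ} (hx : x ∈ U) : ∀ m : ℕ, x ≠ -m := fun m h =>
  hx (-m) (by push_cast [h]; ring)

lemma analyticAt_Gamma_complex {x : ℝ} (hx : x ∈ U) : AnalyticAt ℂ Complex.Gamma x := by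
  rw [Complex.analyticAt_iff_eventually_differentiableAt]
  rw [Metric.eventually_nhds_iff]
  have h1 : (⌊x⌋ : ℝ) < x := by
    rcases lt_or_eq_of_le (Int.floor_le x) with h | h
    · exact h
    · exact absurd h.symm (hx ⌊x⌋)
  have h2 : x < (⌊x⌋ : ℝ) + 1 := Int.lt_floor_add_one x
  refine ⟨min (x - ⌊x⌋) ((⌊x⌋ : ℝ) + 1 - x), lt_min (by linarith) (by linarith), fun {z} hz => ?_⟩
  apply Complex.differentiableAt_Gamma
  intro m hm
  have hd : |(-(m:ℝ)) - x| < min (x - ⌊x⌋) ((⌊x⌋ : ℝ) + 1 - x) := by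
    have hzd : dist z ↑x = |(-(m:ℝ)) - x| := by
      rw [hm, Complex.dist_eq, show -(m:ℂ) - ↑x = ((-(m:ℝ) - x : ℝ) : ℂ) by push_cast; ring,
        Complex.norm_real, Real.norm_eq_abs]
    rwa [hzd] at hz
  have hint : ∃ n : ℤ, (-(m:ℝ)) = (n : ℝ) := ⟨-m, by push_cast; ring⟩
  obtain ⟨n, hn⟩ := hint
  rw [hn] at hd
  rcases le_or_gt (n : ℝ) (⌊x⌋ : ℝ) with h | h
  · have := abs_lt.mp hd
    have h5 := min_le_left (x - (⌊x⌋:ℝ)) ((⌊x⌋ : ℝ) + 1 - x)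
    linarith [this.1]
  · have h6 : (⌊x⌋ : ℝ) + 1 ≤ (n : ℝ) := by
      exact_mod_cast Int.lt_iff_add_one_le.mp (by exact_mod_cast h)
    have := abs_lt.mp hd
    have h5 := min_le_right (x - (⌊x⌋:ℝ)) ((⌊x⌋ : ℝ) + 1 - x)
    linarith [this.2]

lemma analyticAt_Gamma_real {x : ℝ} (hx : x ∈ U) : AnalyticAt ℝ Real.Gamma x := by
  have hC := analyticAt_Gamma_complex hx
  have heq : Real.Gamma = fun y : ℝ => (Complex.Gamma ↑y).re := by
    funext y
    rw [Complex.Gamma_ofReal, Complex.ofReal_re]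
  rw [heq]
  exact (Complex.reCLM.analyticAt _).comp
    ((hC.restrictScalars).comp (Complex.ofRealCLM.analyticAt x))

lemma analyticOnNhd_digamma : AnalyticOnNhd ℝ digamma U := by
  have hG : AnalyticOnNhd ℝ Real.Gamma U := fun x hx => analyticAt_Gamma_real hx
  have hG' : AnalyticOnNhd ℝ (deriv Real.Gamma) U := hG.deriv_of_isOpen U_open
  exact fun x hx => (hG' x hx).div (hG x hx) (Real.Gamma_ne_zero (U_Gamma_ne hx))

lemma analyticOnNhd_iteratedDeriv_digamma (k : ℕ) :
    AnalyticOnNhd ℝ (iteratedDeriv k digamma) U := by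
  rw [iteratedDeriv_eq_iterate]
  exact analyticOnNhd_digamma.iterated_deriv k

lemma hasDerivAt_cot {y : ℝ} (hy : Real.sin y ≠ 0) :
    HasDerivAt Real.cot (-(1 + Real.cot y ^ 2)) y := by
  have h := (Real.hasDerivAt_cos y).div (Real.hasDerivAt_sin y) hy
  have heq : (fun x => Real.cos x / Real.sin x) = Real.cot := by
    funext t; rw [Real.cot_eq_cos_div_sin]
  rw [show (Real.cos / Real.sin) = (fun x => Real.cos x / Real.sin x) from rfl, heq] at h
  refine h.congr_deriv (Eq.symm ?_)
  rw [Real.cot_eq_cos_div_sin]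
  field_simp
  nlinarith [Real.sin_sq_add_cos_sq y]

lemma aeval_hasDerivAt (p : ℚ[X]) (c : ℝ) :
    HasDerivAt (fun t : ℝ => (aeval t p : ℝ)) (aeval c (derivative p) : ℝ) c := by
  have h1 : ∀ (q : ℚ[X]) (t : ℝ), (aeval t q : ℝ) = (q.map (algebraMap ℚ ℝ)).eval t :=
    fun q t => by rw [aeval_def, eval_map]
  have h2 := Polynomial.hasDerivAt (p.map (algebraMap ℚ ℝ)) c
  simp only [derivative_map, ← h1] at h2
  exact h2

lemma digamma_reflection {x : ℝ} (hx : x ∈ U) :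
    digamma (1 - x) - digamma x = π * Real.cot (π * x) := by
  have hGx : Real.Gamma x ≠ 0 := Real.Gamma_ne_zero (U_Gamma_ne hx)
  have hGx' : Real.Gamma (1-x) ≠ 0 := Real.Gamma_ne_zero (U_Gamma_ne (U_one_sub hx))
  have hsin := U_sin_ne hx
  have hdx : DifferentiableAt ℝ Real.Gamma x := Real.differentiableAt_Gamma (U_Gamma_ne hx)
  have hdx' : DifferentiableAt ℝ Real.Gamma (1-x) :=
    Real.differentiableAt_Gamma (U_Gamma_ne (U_one_sub hx))
  have h1 : HasDerivAt (fun y : ℝ => Real.Gamma (1 - y)) (-(deriv Real.Gamma (1-x))) x := by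
    have := (hdx'.hasDerivAt).comp x ((hasDerivAt_id x).const_sub 1)
    simpa [Function.comp_def] using this
  have hg : HasDerivAt (fun y => Real.Gamma y * Real.Gamma (1-y))
      (deriv Real.Gamma x * Real.Gamma (1-x) + Real.Gamma x * (-(deriv Real.Gamma (1-x)))) x :=
    (hdx.hasDerivAt).mul h1
  have hinner : HasDerivAt (fun y : ℝ => π * y) π x := by
    simpa using (hasDerivAt_id x).const_mul π
  have hs : HasDerivAt (fun y : ℝ => Real.sin (π * y)) (Real.cos (π * x) * π) x := by
    have := (Real.hasDerivAt_sin (π * x)).comp x hinner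
    simpa [Function.comp_def] using this
  have hh : HasDerivAt (fun y : ℝ => π / Real.sin (π * y))
      ((0 * Real.sin (π*x) - π * (Real.cos (π * x) * π)) / (Real.sin (π * x))^2) x :=
    (hasDerivAt_const x π).div hs hsin
  have hfun : (fun y => Real.Gamma y * Real.Gamma (1-y)) = (fun y : ℝ => π / Real.sin (π * y)) := by
    funext y; exact Real.Gamma_mul_Gamma_one_sub y
  rw [hfun] at hg
  have hE := hg.unique hh
  have hkey : Real.Gamma x * Real.Gamma (1-x) = π / Real.sin (π * x) :=
    Real.Gamma_mul_Gamma_one_sub x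
  have hE' : (deriv Real.Gamma x * Real.Gamma (1-x) - Real.Gamma x * deriv Real.Gamma (1-x))
      * Real.sin (π*x)^2 = -(π^2 * Real.cos (π*x)) := by
    rw [eq_div_iff (pow_ne_zero 2 hsin)] at hE
    linear_combination hE
  have hkey' : Real.Gamma x * Real.Gamma (1-x) * Real.sin (π*x) = π := by
    rw [hkey]; field_simp
  rw [digamma, digamma, Real.cot_eq_cos_div_sin]
  rw [div_sub_div _ _ hGx' hGx, ← mul_div_assoc, div_eq_div_iff (mul_ne_zero hGx' hGx) hsin]
  apply mul_right_cancel₀ hsin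
  linear_combination (-1:ℝ) * hE' - (π * Real.cos (π*x)) * hkey'

lemma key_identity (k : ℕ) : ∀ x ∈ U,
    iteratedDeriv k digamma (1 - x) - (-1:ℝ)^k * iteratedDeriv k digamma x
      = (-1:ℝ)^k * π^(k+1) * (aeval (Real.cot (π * x)) (Pcot k) : ℝ) := by
  induction k with
  | zero =>
    intro x hx
    simpa [Pcot] using digamma_reflection hx
  | succ k ih =>
    intro x hx
    have hev : (fun y => iteratedDeriv k digamma (1 - y) - (-1:ℝ)^k * iteratedDeriv k digamma y)
        =ᶠ[𝓝 x] (fun y => (-1:ℝ)^k * π^(k+1) * (aeval (Real.cot (π * y)) (Pcot k) : ℝ)) := by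
      filter_upwards [U_open.mem_nhds hx] with y hy using ih y hy
    -- LHS derivative
    have hd1 : HasDerivAt (iteratedDeriv k digamma) (iteratedDeriv (k+1) digamma (1-x)) (1-x) := by
      rw [iteratedDeriv_succ]
      exact ((analyticOnNhd_iteratedDeriv_digamma k (1-x) (U_one_sub hx)).differentiableAt).hasDerivAt
    have hd2 : HasDerivAt (iteratedDeriv k digamma) (iteratedDeriv (k+1) digamma x) x := by
      rw [iteratedDeriv_succ]
      exact ((analyticOnNhd_iteratedDeriv_digamma k x hx).differentiableAt).hasDerivAt
    have hsub : HasDerivAt (fun y : ℝ => 1 - y) (-1) x := by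
      simpa using (hasDerivAt_id x).const_sub 1
    have hL : HasDerivAt
        (fun y => iteratedDeriv k digamma (1 - y) - (-1:ℝ)^k * iteratedDeriv k digamma y)
        (iteratedDeriv (k+1) digamma (1-x) * (-1) - (-1:ℝ)^k * iteratedDeriv (k+1) digamma x) x := by
      have hcomp := hd1.comp x hsub
      have : (fun y => iteratedDeriv k digamma (1 - y))
          = (iteratedDeriv k digamma) ∘ (fun y : ℝ => 1 - y) := rfl
      rw [← this] at hcomp
      exact hcomp.sub (hd2.const_mul _)
    -- RHS derivative
    have hcotd : HasDerivAt Real.cot (-(1 + Real.cot (π*x) ^ 2)) (π * x) :=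
      hasDerivAt_cot (U_sin_ne hx)
    have hinner : HasDerivAt (fun y : ℝ => π * y) π x := by
      simpa using (hasDerivAt_id x).const_mul π
    have hcot2 : HasDerivAt (fun y : ℝ => Real.cot (π * y)) (-(1 + Real.cot (π*x) ^ 2) * π) x := by
      have := hcotd.comp x hinner
      exact this
    have hpoly := (aeval_hasDerivAt (Pcot k) (Real.cot (π * x))).comp x hcot2
    have hR : HasDerivAt
        (fun y => (-1:ℝ)^k * π^(k+1) * (aeval (Real.cot (π * y)) (Pcot k) : ℝ))
        ((-1:ℝ)^k * π^(k+1) * ((aeval (Real.cot (π*x)) (derivative (Pcot k)) : ℝ)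
          * (-(1 + Real.cot (π*x) ^ 2) * π))) x := by
      exact hpoly.const_mul _
    have hder : deriv (fun y => iteratedDeriv k digamma (1 - y) - (-1:ℝ)^k * iteratedDeriv k digamma y) x
        = deriv (fun y => (-1:ℝ)^k * π^(k+1) * (aeval (Real.cot (π * y)) (Pcot k) : ℝ)) x :=
      hev.deriv_eq
    rw [hL.deriv, hR.deriv] at hder
    have hpc : (aeval (Real.cot (π*x)) (Pcot (k+1)) : ℝ)
        = -((1 + Real.cot (π*x)^2) * (aeval (Real.cot (π*x)) (derivative (Pcot k)) : ℝ)) := by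
      show (aeval (Real.cot (π*x)) (Pcot (k+1)) : ℝ) = _
      rw [show Pcot (k+1) = -((1 + X^2) * derivative (Pcot k)) from rfl]
      simp [map_neg, map_mul, map_add, map_one, map_pow, aeval_X]
    rw [pow_succ, pow_succ]
    linear_combination (-1:ℝ) * hder + ((-1:ℝ)^k * π^(k+1) * π) * hpc


lemma Pcot_odd_neg (m : ℕ) (t : ℝ) : (aeval t (Pcot (2*m+1)) : ℝ) < 0 := by
  obtain ⟨A, B, hA, hB, h1, h2⟩ := Pcot_struct m
  rw [h1, map_neg, map_mul, map_add, map_one, map_pow, aeval_X, aeval_comp, map_pow, aeval_X]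
  have hp := hA.aeval_pos (s := t^2) (by positivity)
  nlinarith [sq_nonneg t]

lemma Pcot_even_eq (m : ℕ) (t : ℝ) :
    ∃ b : ℝ, 0 < b ∧ (aeval t (Pcot (2*m+2)) : ℝ) = t * b := by
  obtain ⟨A, B, hA, hB, h1, h2⟩ := Pcot_struct m
  have hb := hB.aeval_pos (s := t^2) (by positivity)
  refine ⟨(1 + t^2) * (aeval (t^2) B : ℝ), by nlinarith [sq_nonneg t], ?_⟩
  rw [h2, map_mul, map_mul, map_add, map_one, map_pow, aeval_X, aeval_comp, map_pow, aeval_X]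

lemma aeval_isIntegral {c : ℝ} (hc : IsIntegral ℚ c) (p : ℚ[X]) :
    IsIntegral ℚ (aeval c p : ℝ) :=
  adjoin_le_integralClosure hc (aeval_mem_adjoin_singleton ℚ c)

open Real in
theorem stmt_13 (k : ℕ) (hk : 0 < k) (α : ℚ) (hα : ¬ ∃ m : ℤ, α = m) :
    ((iteratedDeriv k digamma (1 - (α:ℝ)) - (-1 : ℝ)^k * iteratedDeriv k digamma (α:ℝ) = 0) ∨
      ∃ a : ℝ, IsAlgebraic ℚ a ∧ a ≠ 0 ∧
        iteratedDeriv k digamma (1 - (α:ℝ)) - (-1 : ℝ)^k * iteratedDeriv k digamma (α:ℝ) =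
          a * π^(k+1)) ∧
    (iteratedDeriv k digamma (1 - (α:ℝ)) - (-1 : ℝ)^k * iteratedDeriv k digamma (α:ℝ) = 0 ↔
      Even k ∧ ∃ m : ℤ, α = m + 1/2) := by
  have hxU : (α : ℝ) ∈ U := by
    intro n h
    exact hα ⟨n, by exact_mod_cast h⟩
  set x : ℝ := (α : ℝ) with hxdef
  set c : ℝ := Real.cot (π * x) with hcdef
  set E : ℝ := (aeval c (Pcot k) : ℝ) with hEdef
  have hkey : iteratedDeriv k digamma (1 - x) - (-1:ℝ)^k * iteratedDeriv k digamma x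
      = (-1:ℝ)^k * π^(k+1) * E := key_identity k x hxU
  have hsin := U_sin_ne hxU
  have hciff : c = 0 ↔ ∃ m : ℤ, α = m + 1/2 := by
    constructor
    · intro h
      have hcos : Real.cos (π * x) = 0 := by
        rw [hcdef, Real.cot_eq_cos_div_sin, _root_.div_eq_zero_iff] at h
        tauto
      obtain ⟨n, hn⟩ := Real.cos_eq_zero_iff.mp hcos
      refine ⟨n, ?_⟩
      have hπ : π ≠ 0 := Real.pi_ne_zero
      have hre : (α : ℝ) = (n : ℝ) + 1/2 := by
        have : π * x = (2 * n + 1) * π / 2 := hn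
        field_simp at this
        nlinarith [this, Real.pi_pos]
      have : (α : ℝ) = (((n : ℚ) + 1/2 : ℚ) : ℝ) := by push_cast; exact hre
      exact_mod_cast this
    · rintro ⟨m, rfl⟩
      have hcos : Real.cos (π * x) = 0 := by
        apply Real.cos_eq_zero_iff.mpr
        refine ⟨m, ?_⟩
        rw [hxdef]
        push_cast
        ring
      rw [hcdef, Real.cot_eq_cos_div_sin, hcos, zero_div]
  have hEint : IsIntegral ℚ E := aeval_isIntegral (isIntegral_cot_pi_rat α) (Pcot k)
  have haint : IsIntegral ℚ ((-1:ℝ)^k * E) := by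
    rcases Nat.even_or_odd k with he | ho
    · rw [he.neg_one_pow]; simpa using hEint
    · rw [ho.neg_one_pow]; simpa using hEint.neg
  have halg : IsAlgebraic ℚ ((-1:ℝ)^k * E) := isAlgebraic_iff_isIntegral.mpr haint
  have hπpow : π^(k+1) ≠ 0 := pow_ne_zero _ Real.pi_ne_zero
  rcases Nat.even_or_odd k with he | ho
  · -- k even, k ≥ 1 so k = 2m+2
    obtain ⟨j, hj⟩ := he
    have hm : ∃ m : ℕ, k = 2*m + 2 := ⟨j - 1, by omega⟩
    obtain ⟨m, hmk⟩ := hm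
    obtain ⟨b, hb, hEb⟩ := Pcot_even_eq m c
    rw [← hmk] at hEb
    by_cases hc0 : c = 0
    · have hE0 : E = 0 := by rw [hEdef, hEb, hc0, zero_mul]
      have hΔ : iteratedDeriv k digamma (1 - x) - (-1:ℝ)^k * iteratedDeriv k digamma x = 0 := by
        rw [hkey, hE0, mul_zero]
      exact ⟨Or.inl hΔ, by
        constructor
        · intro _; exact ⟨⟨j, hj⟩, hciff.mp hc0⟩
        · intro _; exact hΔ⟩
    · have hE0 : E ≠ 0 := by
        rw [hEdef, hEb]
        exact mul_ne_zero hc0 (ne_of_gt hb)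
      have hane : ((-1:ℝ)^k * E) ≠ 0 := by
        apply mul_ne_zero _ hE0
        simp [pow_ne_zero]
      have hΔeq : iteratedDeriv k digamma (1 - x) - (-1:ℝ)^k * iteratedDeriv k digamma x
          = ((-1:ℝ)^k * E) * π^(k+1) := by rw [hkey]; ring
      refine ⟨Or.inr ⟨(-1:ℝ)^k * E, halg, hane, hΔeq⟩, ?_⟩
      constructor
      · intro h
        rw [hΔeq] at h
        exact absurd (by rcases mul_eq_zero.mp h with h | h; exacts [h, absurd h hπpow]) hane
      · rintro ⟨-, hhalf⟩
        exact absurd (hciff.mpr hhalf) hc0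
  · -- k odd
    obtain ⟨m, hmk⟩ := ho
    have hEneg : E < 0 := by
      rw [hEdef, hmk]
      exact Pcot_odd_neg m c
    have hane : ((-1:ℝ)^k * E) ≠ 0 := mul_ne_zero (by simp [pow_ne_zero]) (ne_of_lt hEneg)
    have hΔeq : iteratedDeriv k digamma (1 - x) - (-1:ℝ)^k * iteratedDeriv k digamma x
        = ((-1:ℝ)^k * E) * π^(k+1) := by rw [hkey]; ring
    refine ⟨Or.inr ⟨(-1:ℝ)^k * E, halg, hane, hΔeq⟩, ?_⟩
    constructor
    · intro h
      rw [hΔeq] at h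
      exact absurd (by rcases mul_eq_zero.mp h with h | h; exacts [h, absurd h hπpow]) hane
    · rintro ⟨he, -⟩
      exact absurd he (Nat.not_even_iff_odd.mpr ⟨m, hmk⟩)
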